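/- The modified two-point function on the empty comb satisfies $G^{(0)}_\infty(x;n) = (1-x)^{n/2}\,\frac{2\sqrt{x}}{(1+\sqrt{x})^n - (1-\sqrt{x})^n}$, and for fixed $x \in (0,1)$ this is a strictly decreasing function of the real variable $n > 0$. -/
import Mathlib


/-- The modified two-point function on the empty comb (the half-line `N∞`):
`G⁰_∞(x;n)` is the generating function for walks from the root reaching vertex `n`
for the first time without revisiting the root.  It is characterized by
`G⁰_∞(x;n) = (1-x)^{1/2} ∏_{k=1}^{n-1} v_k` where `v_k`, the passage generating
function from `k` to `k+1` for the walk killed at the root, satisfies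
`v_1 = (1-x)^{1/2}/2` and `v_{k+1} = ((1-x)^{1/2}/2)/(1 - ((1-x)^{1/2}/2) v_k)`.
Then `G⁰_∞(x;n) = (1-x)^{n/2} · 2√x / ((1+√x)^n - (1-√x)^n)`, and for fixed
`x ∈ (0,1)` this closed form is a strictly decreasing function of real `n > 0`. -/
theorem modified_two_point_empty_comb (x : ℝ) (hx0 : 0 < x) (hx1 : x < 1)
    (v G : ℕ → ℝ)
    (hv1 : v 1 = (1 - x) ^ ((1 : ℝ) / 2) / 2)
    (hvrec : ∀ k : ℕ, 1 ≤ k →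
      v (k + 1) = ((1 - x) ^ ((1 : ℝ) / 2) / 2) /
        (1 - ((1 - x) ^ ((1 : ℝ) / 2) / 2) * v k))
    (hG : ∀ n : ℕ, 1 ≤ n →
      G n = (1 - x) ^ ((1 : ℝ) / 2) * ∏ k ∈ Finset.Icc 1 (n - 1), v k) :
    (∀ n : ℕ, 1 ≤ n →
      G n = (1 - x) ^ ((n : ℝ) / 2) * (2 * Real.sqrt x) /
          ((1 + Real.sqrt x) ^ n - (1 - Real.sqrt x) ^ n)) ∧
    StrictAntiOn
      (fun s : ℝ => (1 - x) ^ (s / 2) * (2 * Real.sqrt x) /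
          ((1 + Real.sqrt x) ^ s - (1 - Real.sqrt x) ^ s))
      (Set.Ioi (0 : ℝ)) := by
  set s := Real.sqrt x with hsdef
  have hs0 : 0 < s := Real.sqrt_pos.mpr hx0
  have hss : s * s = x := Real.mul_self_sqrt hx0.le
  have hs1 : s < 1 := by nlinarith
  have h1x : (0 : ℝ) < 1 - x := by linarith
  have hb0 : (0 : ℝ) < 1 - s := by linarith
  have hba : (1 : ℝ) - s < 1 + s := by linarith
  have ha0 : (0 : ℝ) < 1 + s := by linarith
  -- the square root of 1 - x
  have hr : (1 - x) ^ ((1 : ℝ) / 2) = Real.sqrt (1 - x) := (Real.sqrt_eq_rpow _).symm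
  have hr2 : Real.sqrt (1 - x) * Real.sqrt (1 - x) = 1 - x := Real.mul_self_sqrt h1x.le
  set q := Real.sqrt (1 - x) with hqdef
  have hq0 : 0 < q := Real.sqrt_pos.mpr h1x
  -- the denominator sequence
  set d : ℕ → ℝ := fun k => (1 + s) ^ k - (1 - s) ^ k with hddef
  have hd : ∀ k : ℕ, 1 ≤ k → 0 < d k := by
    intro k hk
    have : (1 - s) ^ k < (1 + s) ^ k := pow_lt_pow_left₀ hba hb0.le (by omega)
    simpa [hddef] using sub_pos.mpr this
  have hdrec : ∀ k : ℕ, d (k + 2) = 2 * d (k + 1) - (1 - x) * d k := by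
    intro k
    simp only [hddef]
    rw [← hss]
    ring
  have hd1 : d 1 = 2 * s := by simp [hddef]; ring
  have hd2 : d 2 = 4 * s := by simp [hddef]; ring
  -- closed form for v
  have hv : ∀ k : ℕ, 1 ≤ k → v k = q * d k / d (k + 1) := by
    intro k hk
    induction k with
    | zero => omega
    | succ m ih =>
      rcases Nat.eq_or_lt_of_le hk with h | h
      · -- m + 1 = 1
        have hm : m = 0 := by omega
        subst hm
        rw [hv1, hr, hd1, hd2]
        field_simp
        ring
      · have hm : 1 ≤ m := by omega
        have ihm := ih hm
        have hdm1 : 0 < d (m + 1) := hd _ (by omega)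
        have hdm2 : 0 < d (m + 2) := hd _ (by omega)
        have hden : 1 - q / 2 * (q * d m / d (m + 1)) = d (m + 2) / (2 * d (m + 1)) := by
          have h := hdrec m
          field_simp
          nlinarith [hr2]
        rw [hvrec m hm, hr, ihm, hden]
        show q / 2 / (d (m + 2) / (2 * d (m + 1))) = q * d (m + 1) / d (m + 2)
        rw [div_div_eq_mul_div]
        ring
  -- closed form for the product
  have hprod : ∀ m : ℕ, (∏ k ∈ Finset.Icc 1 m, v k) = q ^ m * d 1 / d (m + 1) := by
    intro m
    induction m with
    | zero =>
      simp only [pow_zero, one_mul, zero_add, Finset.Icc_self, Finset.Icc_eq_empty_of_lt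
        (by norm_num : (1:ℕ) > 0), Finset.prod_empty, show (0:ℕ)+1 = 1 from rfl]
      exact (div_self (hd 1 le_rfl).ne').symm
    | succ m ih =>
      rw [Finset.prod_Icc_succ_top (by omega), ih, hv (m + 1) (by omega)]
      have hdm1 : d (m + 1) ≠ 0 := (hd _ (by omega)).ne'
      have hdm2 : d (m + 2) ≠ 0 := (hd _ (by omega)).ne'
      field_simp
      ring
  constructor
  · -- part 1
    intro n hn
    obtain ⟨m, rfl⟩ : ∃ m, n = m + 1 := ⟨n - 1, by omega⟩
    rw [hG _ hn, hr]
    simp only [Nat.add_sub_cancel]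
    rw [hprod m, hd1]
    have hpow : (1 - x) ^ (((m + 1 : ℕ) : ℝ) / 2) = q ^ (m + 1) := by
      rw [hqdef, Real.sqrt_eq_rpow, ← Real.rpow_natCast ((1 - x) ^ ((1 : ℝ) / 2)) (m + 1),
        ← Real.rpow_mul h1x.le]
      congr 1
      push_cast
      ring
    rw [hpow]
    have : ((1 + Real.sqrt x) ^ (m + 1) - (1 - Real.sqrt x) ^ (m + 1)) = d (m + 1) := rfl
    rw [this, pow_succ]
    ring
  · -- part 2: strict antitonicity
    have hkey : ∀ t : ℝ, (1 - x) ^ (t / 2) * (2 * s) / ((1 + s) ^ t - (1 - s) ^ t)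
        = 2 * s / (((1 + s) / (1 - s)) ^ (t / 2) - ((1 - s) / (1 + s)) ^ (t / 2)) := by
      intro t
      have h1 : (1 + s) ^ t = (1 - x) ^ (t / 2) * ((1 + s) / (1 - s)) ^ (t / 2) := by
        rw [← Real.mul_rpow h1x.le (by positivity)]
        rw [show (1 - x) * ((1 + s) / (1 - s)) = (1 + s) * (1 + s) by
          field_simp; nlinarith]
        rw [Real.mul_rpow ha0.le ha0.le, ← Real.rpow_add ha0]
        congr 1
        ring
      have h2 : (1 - s) ^ t = (1 - x) ^ (t / 2) * ((1 - s) / (1 + s)) ^ (t / 2) := by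
        rw [← Real.mul_rpow h1x.le (by positivity)]
        rw [show (1 - x) * ((1 - s) / (1 + s)) = (1 - s) * (1 - s) by
          field_simp; nlinarith]
        rw [Real.mul_rpow hb0.le hb0.le, ← Real.rpow_add hb0]
        congr 1
        ring
      rw [h1, h2, ← mul_sub,
        mul_div_mul_left _ _ (Real.rpow_pos_of_pos h1x (t / 2)).ne']
    intro p hp r hr' hpr
    simp only [Set.mem_Ioi] at hp hr'
    simp only [← hsdef, hkey]
    have hu1 : 1 < (1 + s) / (1 - s) := (one_lt_div hb0).mpr hba
    have hw0 : 0 < (1 - s) / (1 + s) := by positivity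
    have hw1 : (1 - s) / (1 + s) < 1 := (div_lt_one ha0).mpr hba
    have gpos : 0 < ((1 + s) / (1 - s)) ^ (p / 2) - ((1 - s) / (1 + s)) ^ (p / 2) := by
      have h1 : 1 < ((1 + s) / (1 - s)) ^ (p / 2) :=
        (Real.one_lt_rpow_iff_of_pos (by positivity)).mpr (Or.inl ⟨hu1, by linarith⟩)
      have h2 : ((1 - s) / (1 + s)) ^ (p / 2) < 1 :=
        Real.rpow_lt_one hw0.le hw1 (by linarith)
      linarith
    have gmono : ((1 + s) / (1 - s)) ^ (p / 2) - ((1 - s) / (1 + s)) ^ (p / 2)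
        < ((1 + s) / (1 - s)) ^ (r / 2) - ((1 - s) / (1 + s)) ^ (r / 2) := by
      have h1 : ((1 + s) / (1 - s)) ^ (p / 2) < ((1 + s) / (1 - s)) ^ (r / 2) :=
        (Real.rpow_lt_rpow_left_iff hu1).mpr (by linarith)
      have h2 : ((1 - s) / (1 + s)) ^ (r / 2) < ((1 - s) / (1 + s)) ^ (p / 2) :=
        (Real.rpow_lt_rpow_left_iff_of_base_lt_one hw0 hw1).mpr (by linarith)
      linarith
    exact div_lt_div_of_pos_left (by positivity) gpos gmono
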